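/- Let K be a cone field on a topological real vector bundle (E,p,M) over a paracompact topological manifold M without boundary, and order the space Γ⁰(E) of continuous sections by σ₁ ≤ σ₂ iff σ₂ − σ₁ ∈ K⁰_Γ. Then (Γ⁰(E), ≤) is an ordered vector space that is directed on both sides: for any σ₁, σ₂ ∈ Γ⁰(E) there exist σ, σ' ∈ Γ⁰(E) with σ ≤ σ₁ ≤ σ' and σ ≤ σ₂ ≤ σ'. -/
import Mathlib


open Bundle Topology Set

/-- A *cone field* on a topological real vector bundle `(E, p, M)`:
to each `x ∈ M` it assigns a subset `K x` of the fiber `E x` such that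
(K1) each `K x` is a convex cone, closed in the fiber, pointed and solid, and
(K2) the union of the fiberwise interiors and the union of the fiberwise
complements are open in the total space. -/
structure IsConeField (F : Type*) [NormedAddCommGroup F] [NormedSpace ℝ F]
    {M : Type*} [TopologicalSpace M]
    (E : M → Type*) [∀ x, AddCommGroup (E x)] [∀ x, Module ℝ (E x)]
    [∀ x, TopologicalSpace (E x)] [TopologicalSpace (Bundle.TotalSpace F E)]
    [FiberBundle F E] [VectorBundle ℝ F E]
    (K : ∀ x, Set (E x)) : Prop where
  add_mem : ∀ x, ∀ v ∈ K x, ∀ w ∈ K x, v + w ∈ K x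
  smul_mem : ∀ x, ∀ c : ℝ, 0 ≤ c → ∀ v ∈ K x, c • v ∈ K x
  isClosed : ∀ x, IsClosed (K x)
  pointed : ∀ x, K x ∩ -(K x) = {0}
  solid : ∀ x, (interior (K x)).Nonempty
  isOpen_int : IsOpen {p : Bundle.TotalSpace F E | p.2 ∈ interior (K p.proj)}
  isOpen_compl : IsOpen {p : Bundle.TotalSpace F E | p.2 ∉ K p.proj}

variable (F : Type*) [NormedAddCommGroup F] [NormedSpace ℝ F]
  {M : Type*} [TopologicalSpace M]
  (E : M → Type*) [∀ x, AddCommGroup (E x)] [∀ x, Module ℝ (E x)]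
  [∀ x, TopologicalSpace (E x)] [TopologicalSpace (Bundle.TotalSpace F E)]
  [FiberBundle F E] [VectorBundle ℝ F E]

/-- A (set-theoretic) section `σ` of the bundle is a *continuous section*
if `x ↦ (x, σ x)` is continuous into the total space. -/
def IsContSection (σ : ∀ x, E x) : Prop :=
  Continuous (fun x => (⟨x, σ x⟩ : Bundle.TotalSpace F E))

variable {F E} in
/-- `σ` is a *positive section* for the cone field `K` if `σ x ∈ K x` for all `x`. -/
def IsPosSection (K : ∀ x, Set (E x)) (σ : ∀ x, E x) : Prop :=
  ∀ x, σ x ∈ K x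

variable {F E} in
/-- The order relation on sections induced by the cone of positive sections:
`σ₁ ≤ σ₂` iff `σ₂ - σ₁` is a positive section. -/
def ConeLE (K : ∀ x, Set (E x)) (σ₁ σ₂ : ∀ x, E x) : Prop :=
  ∀ x, σ₂ x - σ₁ x ∈ K x

variable {F E} in
/-- `σ` is *`ζ`-measurable*: there is `λ ≥ 0` with `-λ ζ ≤ σ ≤ λ ζ` in the cone order. -/
def IsZetaMeas (K : ∀ x, Set (E x)) (ζ σ : ∀ x, E x) : Prop :=
  ∃ lam : ℝ, 0 ≤ lam ∧ ConeLE K (fun x => (-lam) • ζ x) σ ∧ ConeLE K σ (fun x => lam • ζ x)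

variable {F E} in
/-- The norm `|σ|⁰_ζ = min {λ ≥ 0 | -λζ ≤ σ ≤ λζ}` (as an infimum; the
minimum is attained, see the corresponding statement). -/
noncomputable def zetaNorm (K : ∀ x, Set (E x)) (ζ σ : ∀ x, E x) : ℝ :=
  sInf {lam : ℝ | 0 ≤ lam ∧ ConeLE K (fun x => (-lam) • ζ x) σ ∧ ConeLE K σ (fun x => lam • ζ x)}

/-- The graph (Whitney `C⁰`) topology `WO⁰`, generated by the sets
`W(U) = {σ | ∀ x, (x, σ x) ∈ U}` for `U` open in the total space. -/
def WO0 : TopologicalSpace (∀ x, E x) :=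
  TopologicalSpace.generateFrom
    {S | ∃ U : Set (Bundle.TotalSpace F E), IsOpen U ∧
      S = {σ : ∀ x, E x | ∀ x, (⟨x, σ x⟩ : Bundle.TotalSpace F E) ∈ U}}

/-- The space `Γ⁰(E)` of continuous sections of the bundle. -/
def ContSection : Type _ := {σ : ∀ x, E x // IsContSection F E σ}


section Helpers

variable {F E}

/-- Continuity of a section at a point, in terms of the trivialization at that point. -/
theorem contAt_section_iff {σ : ∀ x, E x} {x₀ : M} :
    ContinuousAt (fun x => (⟨x, σ x⟩ : Bundle.TotalSpace F E)) x₀ ↔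
      ContinuousAt (fun x => ((trivializationAt F E x₀) ⟨x, σ x⟩).2) x₀ := by
  rw [FiberBundle.continuousAt_totalSpace]
  exact ⟨fun h => h.2, fun h => ⟨continuousAt_id, h⟩⟩

theorem contAt_zero_section (x₀ : M) :
    ContinuousAt (fun x => (⟨x, (0 : E x)⟩ : Bundle.TotalSpace F E)) x₀ := by
  rw [contAt_section_iff]
  set e := trivializationAt F E x₀
  have hb : ∀ᶠ x in 𝓝 x₀, x ∈ e.baseSet :=
    (e.open_baseSet.mem_nhds (mem_baseSet_trivializationAt F E x₀))
  refine ContinuousAt.congr (f := fun _ => (0:F)) continuousAt_const ?_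
  filter_upwards [hb] with x hx
  exact ((e.linear ℝ hx).mk' _).map_zero.symm

theorem contAt_smul_section {σ : ∀ x, E x} {f : M → ℝ} {x₀ : M}
    (hσ : ContinuousAt (fun x => (⟨x, σ x⟩ : Bundle.TotalSpace F E)) x₀)
    (hf : ContinuousAt f x₀) :
    ContinuousAt (fun x => (⟨x, f x • σ x⟩ : Bundle.TotalSpace F E)) x₀ := by
  rw [contAt_section_iff] at hσ ⊢
  set e := trivializationAt F E x₀
  have hb : ∀ᶠ x in 𝓝 x₀, x ∈ e.baseSet :=
    (e.open_baseSet.mem_nhds (mem_baseSet_trivializationAt F E x₀))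
  refine ContinuousAt.congr (hf.smul hσ) ?_
  filter_upwards [hb] with x hx
  exact ((e.linear ℝ hx).mk' _).map_smul (f x) (σ x) |>.symm

theorem contAt_add_section {σ₁ σ₂ : ∀ x, E x} {x₀ : M}
    (h₁ : ContinuousAt (fun x => (⟨x, σ₁ x⟩ : Bundle.TotalSpace F E)) x₀)
    (h₂ : ContinuousAt (fun x => (⟨x, σ₂ x⟩ : Bundle.TotalSpace F E)) x₀) :
    ContinuousAt (fun x => (⟨x, σ₁ x + σ₂ x⟩ : Bundle.TotalSpace F E)) x₀ := by
  rw [contAt_section_iff] at h₁ h₂ ⊢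
  set e := trivializationAt F E x₀
  have hb : ∀ᶠ x in 𝓝 x₀, x ∈ e.baseSet :=
    (e.open_baseSet.mem_nhds (mem_baseSet_trivializationAt F E x₀))
  refine ContinuousAt.congr (h₁.add h₂) ?_
  filter_upwards [hb] with x hx
  exact ((e.linear ℝ hx).mk' _).map_add (σ₁ x) (σ₂ x) |>.symm

theorem contAt_sub_section {σ₁ σ₂ : ∀ x, E x} {x₀ : M}
    (h₁ : ContinuousAt (fun x => (⟨x, σ₁ x⟩ : Bundle.TotalSpace F E)) x₀)
    (h₂ : ContinuousAt (fun x => (⟨x, σ₂ x⟩ : Bundle.TotalSpace F E)) x₀) :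
    ContinuousAt (fun x => (⟨x, σ₁ x - σ₂ x⟩ : Bundle.TotalSpace F E)) x₀ := by
  have := contAt_add_section h₁ (contAt_smul_section (f := fun _ => (-1 : ℝ)) h₂
    continuousAt_const)
  refine this.congr (Filter.Eventually.of_forall fun x => ?_)
  congr 1
  simp [sub_eq_add_neg]

theorem contAt_finsum_section {ι : Type*} (t : Finset ι) (s : ι → ∀ x, E x) {x₀ : M}
    (h : ∀ i ∈ t, ContinuousAt (fun x => (⟨x, s i x⟩ : Bundle.TotalSpace F E)) x₀) :
    ContinuousAt (fun x => (⟨x, ∑ i ∈ t, s i x⟩ : Bundle.TotalSpace F E)) x₀ := by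
  classical
  induction t using Finset.induction_on with
  | empty => simpa using contAt_zero_section (F := F) (E := E) x₀
  | @insert a t ha ih =>
      have h1 := h _ (Finset.mem_insert_self _ _)
      have h2 := ih fun i hi => h i (Finset.mem_insert_of_mem hi)
      have := contAt_add_section h1 h2
      refine this.congr (Filter.Eventually.of_forall fun x => ?_)
      simp [Finset.sum_insert ha]

theorem zero_mem_cone {K : ∀ x, Set (E x)} (hK : IsConeField F E K) (x : M) :
    (0 : E x) ∈ K x := by
  have : (0 : E x) ∈ K x ∩ -(K x) := by rw [hK.pointed]; rfl
  exact this.1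

theorem smul_mem_interior_cone {K : ∀ x, Set (E x)} (hK : IsConeField F E K) (x : M)
    {c : ℝ} (hc : 0 < c) {v : E x} (hv : v ∈ interior (K x)) :
    c • v ∈ interior (K x) := by
  set e := trivializationAt F E x
  have hx : x ∈ e.baseSet := mem_baseSet_trivializationAt F E x
  let φ : E x ≃L[ℝ] F := e.continuousLinearEquivAt ℝ x hx
  let h : E x ≃ₜ E x :=
    φ.toHomeomorph.trans ((Homeomorph.smulOfNeZero (c : ℝ) hc.ne').trans φ.symm.toHomeomorph)
  have hh : ∀ w : E x, h w = c • w := by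
    intro w
    show φ.symm (c • φ w) = c • w
    rw [map_smul, φ.symm_apply_apply]
  have himg : h '' interior (K x) ⊆ K x := by
    rintro _ ⟨w, hw, rfl⟩
    rw [hh]
    exact hK.smul_mem x c hc.le w (interior_subset hw)
  have hopen : IsOpen (h '' interior (K x)) := h.isOpenMap _ isOpen_interior
  have hsub : h '' interior (K x) ⊆ interior (K x) := interior_maximal himg hopen
  rw [← hh v]
  exact hsub ⟨v, hv, rfl⟩

end Helpers


variable {F E} in
theorem local_dominating {K : ∀ x, Set (E x)} (hK : IsConeField F E K)
    {δ : ∀ x, E x} (hδ : IsContSection F E δ) (x₀ : M) :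
    ∃ U : Set M, IsOpen U ∧ x₀ ∈ U ∧ ∃ τ : ∀ x, E x,
      (∀ x ∈ U, ContinuousAt (fun y => (⟨y, τ y⟩ : Bundle.TotalSpace F E)) x) ∧
      ∀ x ∈ U, τ x ∈ K x ∧ τ x - δ x ∈ K x := by
  classical
  have hδ' : Continuous fun x => (⟨x, δ x⟩ : Bundle.TotalSpace F E) := hδ
  set e := trivializationAt F E x₀ with he
  have hx₀ : x₀ ∈ e.baseSet := mem_baseSet_trivializationAt F E x₀
  obtain ⟨e₀, he₀⟩ := hK.solid x₀
  set φ : E x₀ ≃L[ℝ] F := e.continuousLinearEquivAt ℝ x₀ hx₀ with hφ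
  have hg : Continuous fun s : ℝ => φ.symm (φ e₀ - s • φ (δ x₀)) := by
    exact φ.symm.continuous.comp (continuous_const.sub (continuous_id.smul continuous_const))
  have hgval : ∀ s : ℝ, φ.symm (φ e₀ - s • φ (δ x₀)) = e₀ - s • δ x₀ := by
    intro s; rw [← map_smul, ← map_sub, φ.symm_apply_apply]
  have h0 : φ.symm (φ e₀ - (0 : ℝ) • φ (δ x₀)) ∈ interior (K x₀) := by
    rw [hgval]; simpa using he₀
  have hpre : (fun s : ℝ => φ.symm (φ e₀ - s • φ (δ x₀))) ⁻¹' interior (K x₀) ∈ 𝓝 (0 : ℝ) :=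
    hg.continuousAt.preimage_mem_nhds (isOpen_interior.mem_nhds h0)
  obtain ⟨ε, hε, hball⟩ := Metric.mem_nhds_iff.mp hpre
  set t : ℝ := ε / 2 with ht
  have ht0 : 0 < t := by positivity
  have htmem : e₀ - t • δ x₀ ∈ interior (K x₀) := by
    rw [← hgval]
    apply hball
    have hlt : t < ε := by rw [ht]; exact half_lt_self hε
    simpa [Metric.mem_ball, Real.dist_eq, abs_of_pos ht0] using hlt
  set c : ℝ := t⁻¹ with hc'
  have hc : 0 < c := inv_pos.mpr ht0
  have hce : c • e₀ ∈ interior (K x₀) := smul_mem_interior_cone hK x₀ hc he₀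
  have hcd : c • e₀ - δ x₀ ∈ interior (K x₀) := by
    have := smul_mem_interior_cone hK x₀ hc htmem
    rwa [smul_sub, smul_smul, inv_mul_cancel₀ ht0.ne', one_smul] at this
  set v₀ : F := (e ⟨x₀, c • e₀⟩).2 with hv₀
  set τ : ∀ x, E x := fun x => e.symm x v₀ with hτ
  have hτx₀ : τ x₀ = c • e₀ := e.symm_apply_apply_mk hx₀ _
  have hτcont : ∀ x ∈ e.baseSet,
      ContinuousAt (fun y => (⟨y, τ y⟩ : Bundle.TotalSpace F E)) x := by
    intro x hx
    have hco : ContinuousOn (fun y => (⟨y, τ y⟩ : Bundle.TotalSpace F E)) e.baseSet := by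
      have hsymm := e.continuousOn_symm
      have hpr : ContinuousOn (fun y : M => (y, v₀)) e.baseSet :=
        (continuous_id.prodMk continuous_const).continuousOn
      exact hsymm.comp hpr fun y hy => ⟨hy, mem_univ _⟩
    exact hco.continuousAt (e.open_baseSet.mem_nhds hx)
  have hτδcont : ∀ x ∈ e.baseSet,
      ContinuousAt (fun y => (⟨y, τ y - δ y⟩ : Bundle.TotalSpace F E)) x := fun x hx =>
    contAt_sub_section (hτcont x hx) hδ'.continuousAt
  have hW : IsOpen {p : Bundle.TotalSpace F E | p.2 ∈ interior (K p.proj)} := hK.isOpen_int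
  have h1 : (fun y => (⟨y, τ y⟩ : Bundle.TotalSpace F E)) ⁻¹'
      {p : Bundle.TotalSpace F E | p.2 ∈ interior (K p.proj)} ∈ 𝓝 x₀ :=
    (hτcont x₀ hx₀).preimage_mem_nhds (hW.mem_nhds (by simpa [hτx₀] using hce))
  have h2 : (fun y => (⟨y, τ y - δ y⟩ : Bundle.TotalSpace F E)) ⁻¹'
      {p : Bundle.TotalSpace F E | p.2 ∈ interior (K p.proj)} ∈ 𝓝 x₀ :=
    (hτδcont x₀ hx₀).preimage_mem_nhds (hW.mem_nhds (by
      show τ x₀ - δ x₀ ∈ interior (K x₀)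
      rw [hτx₀]; exact hcd))
  obtain ⟨U, hUsub, hUopen, hx₀U⟩ :=
    mem_nhds_iff.mp (Filter.inter_mem (Filter.inter_mem h1 h2) (e.open_baseSet.mem_nhds hx₀))
  refine ⟨U, hUopen, hx₀U, τ, ?_, ?_⟩
  · intro x hx; exact hτcont x (hUsub hx).2
  · intro x hx
    obtain ⟨⟨ha, hb⟩, _⟩ := hUsub hx
    exact ⟨interior_subset ha, interior_subset hb⟩

variable {F E} in
theorem exists_dominating [T2Space M] [ParacompactSpace M]
    {K : ∀ x, Set (E x)} (hK : IsConeField F E K)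
    {δ : ∀ x, E x} (hδ : IsContSection F E δ) :
    ∃ τ : ∀ x, E x, IsContSection F E τ ∧ (∀ x, τ x ∈ K x) ∧ ∀ x, τ x - δ x ∈ K x := by
  classical
  choose U hUopen hmem τ hτcont hτpos using fun x₀ => local_dominating hK hδ x₀
  obtain ⟨f, hf⟩ := PartitionOfUnity.exists_isSubordinate isClosed_univ U hUopen
    (fun x _ => mem_iUnion.mpr ⟨x, hmem x⟩)
  set τ' : ∀ x, E x := fun x => ∑ᶠ i, f i x • τ i x with hτ'
  have hptfin : ∀ x : M, (Function.support fun i => f i x • τ i x) ⊆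
      {i | x ∈ Function.support (f i)} := by
    intro x i hi
    simp only [Function.mem_support] at hi ⊢
    intro h0; exact hi (by rw [h0, zero_smul])
  have key : ∀ x, τ' x ∈ K x ∧ τ' x - δ x ∈ K x := by
    intro x
    have htfin : {i | x ∈ Function.support (f i)}.Finite := f.locallyFinite.point_finite x
    set tt := htfin.toFinset with htt
    have hsum1 : ∑ i ∈ tt, f i x = 1 := by
      rw [← finsum_eq_sum_of_support_subset]
      · exact f.sum_eq_one (mem_univ x)
      · intro i hi
        simp only [htt, Set.Finite.coe_toFinset]
        exact hi
    have hτeq : τ' x = ∑ i ∈ tt, f i x • τ i x := by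
      apply finsum_eq_sum_of_support_subset
      intro i hi
      simp only [htt, Set.Finite.coe_toFinset]
      exact hptfin x hi
    have hxU : ∀ i, f i x ≠ 0 → x ∈ U i := by
      intro i h0
      exact hf i (subset_tsupport _ h0)
    constructor
    · rw [hτeq]
      refine Finset.sum_induction _ (· ∈ K x) (fun a b ha hb => hK.add_mem x a ha b hb)
        (zero_mem_cone hK x) ?_
      intro i _
      by_cases h0 : f i x = 0
      · rw [h0, zero_smul]; exact zero_mem_cone hK x
      · exact hK.smul_mem x _ (f.nonneg i x) _ (hτpos i x (hxU i h0)).1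
    · have heq : τ' x - δ x = ∑ i ∈ tt, f i x • (τ i x - δ x) := by
        simp only [smul_sub]
        rw [Finset.sum_sub_distrib, ← Finset.sum_smul, hsum1, one_smul, ← hτeq]
      rw [heq]
      refine Finset.sum_induction _ (· ∈ K x) (fun a b ha hb => hK.add_mem x a ha b hb)
        (zero_mem_cone hK x) ?_
      intro i _
      by_cases h0 : f i x = 0
      · rw [h0, zero_smul]; exact zero_mem_cone hK x
      · exact hK.smul_mem x _ (f.nonneg i x) _ (hτpos i x (hxU i h0)).2
  have hcont : IsContSection F E τ' := by
    rw [IsContSection, continuous_iff_continuousAt]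
    intro x₀
    obtain ⟨N, hN, hNfin⟩ := f.locallyFinite x₀
    set tt := hNfin.toFinset with htt
    have hEq : ∀ x ∈ N, τ' x = ∑ i ∈ tt, f i x • τ i x := by
      intro x hx
      apply finsum_eq_sum_of_support_subset
      intro i hi
      simp only [htt, Set.Finite.coe_toFinset]
      have : x ∈ Function.support (f i) := by
        have := hptfin x hi
        simpa using this
      exact ⟨x, this, hx⟩
    have hterm : ∀ i ∈ tt, ContinuousAt
        (fun x => (⟨x, f i x • τ i x⟩ : Bundle.TotalSpace F E)) x₀ := by
      intro i _
      by_cases hx : x₀ ∈ U i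
      · exact contAt_smul_section (hτcont i x₀ hx) (f i).continuous.continuousAt
      · have hnot : x₀ ∉ tsupport (f i) := fun hmemt => hx (hf i hmemt)
        have hev : ∀ᶠ x in 𝓝 x₀, f i x = 0 := by
          filter_upwards [(isClosed_tsupport (f i)).isOpen_compl.mem_nhds hnot] with x hxc
          exact image_eq_zero_of_notMem_tsupport hxc
        refine (contAt_zero_section (F := F) (E := E) x₀).congr ?_
        filter_upwards [hev] with x hx0
        simp [hx0]
    have hsum := contAt_finsum_section tt (fun i x => f i x • τ i x) hterm
    refine hsum.congr ?_
    filter_upwards [hN] with x hx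
    show (⟨x, ∑ i ∈ tt, f i x • τ i x⟩ : Bundle.TotalSpace F E) = ⟨x, τ' x⟩
    rw [hEq x hx]
  exact ⟨τ', hcont, fun x => (key x).1, fun x => (key x).2⟩

/-- `(Γ⁰(E), ≤)` (where `σ₁ ≤ σ₂` iff `σ₂ - σ₁ ∈ K⁰_Γ`) is an ordered
vector space (the relation is reflexive, antisymmetric, transitive, translation
invariant and invariant under multiplication by nonnegative scalars) which is
directed on both sides. -/
theorem coneField_sections_orderedVectorSpace_directed
    {n : ℕ} [ChartedSpace (EuclideanSpace ℝ (Fin n)) M] [T2Space M] [ParacompactSpace M]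
    (K : ∀ x, Set (E x)) (hK : IsConeField F E K) :
    (∀ σ : ∀ x, E x, IsContSection F E σ → ConeLE K σ σ) ∧
    (∀ σ₁ σ₂ : ∀ x, E x, IsContSection F E σ₁ → IsContSection F E σ₂ →
      ConeLE K σ₁ σ₂ → ConeLE K σ₂ σ₁ → σ₁ = σ₂) ∧
    (∀ σ₁ σ₂ σ₃ : ∀ x, E x, IsContSection F E σ₁ → IsContSection F E σ₂ →
      IsContSection F E σ₃ → ConeLE K σ₁ σ₂ → ConeLE K σ₂ σ₃ → ConeLE K σ₁ σ₃) ∧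
    (∀ σ₁ σ₂ τ : ∀ x, E x, IsContSection F E σ₁ → IsContSection F E σ₂ →
      IsContSection F E τ → ConeLE K σ₁ σ₂ →
      ConeLE K (fun x => σ₁ x + τ x) (fun x => σ₂ x + τ x)) ∧
    (∀ σ₁ σ₂ : ∀ x, E x, ∀ c : ℝ, 0 ≤ c → IsContSection F E σ₁ → IsContSection F E σ₂ →
      ConeLE K σ₁ σ₂ → ConeLE K (fun x => c • σ₁ x) (fun x => c • σ₂ x)) ∧
    (∀ σ₁ σ₂ : ∀ x, E x, IsContSection F E σ₁ → IsContSection F E σ₂ →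
      ∃ σ σ' : ∀ x, E x, IsContSection F E σ ∧ IsContSection F E σ' ∧
        ConeLE K σ σ₁ ∧ ConeLE K σ σ₂ ∧ ConeLE K σ₁ σ' ∧ ConeLE K σ₂ σ') := by
  classical
  refine ⟨?_, ?_, ?_, ?_, ?_, ?_⟩
  · intro σ _ x
    simpa using zero_mem_cone hK x
  · intro σ₁ σ₂ _ _ h12 h21
    funext x
    have hmem : σ₂ x - σ₁ x ∈ K x ∩ -(K x) :=
      ⟨h12 x, by rw [Set.mem_neg, neg_sub]; exact h21 x⟩
    rw [hK.pointed] at hmem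
    have := Set.mem_singleton_iff.mp hmem
    exact (sub_eq_zero.mp this).symm
  · intro σ₁ σ₂ σ₃ _ _ _ h12 h23 x
    have := hK.add_mem x _ (h23 x) _ (h12 x)
    simpa [sub_add_sub_cancel] using this
  · intro σ₁ σ₂ τ _ _ _ h x
    simpa [add_sub_add_right_eq_sub] using h x
  · intro σ₁ σ₂ c hc _ _ h x
    have := hK.smul_mem x c hc _ (h x)
    simpa [smul_sub] using this
  · intro σ₁ σ₂ h₁ h₂
    have h₁' : Continuous fun x => (⟨x, σ₁ x⟩ : Bundle.TotalSpace F E) := h₁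
    have h₂' : Continuous fun x => (⟨x, σ₂ x⟩ : Bundle.TotalSpace F E) := h₂
    have hδ : IsContSection F E (fun x => σ₁ x - σ₂ x) := by
      rw [IsContSection, continuous_iff_continuousAt]
      intro x
      exact contAt_sub_section h₁'.continuousAt h₂'.continuousAt
    obtain ⟨τ, hτc, hτK, hτd⟩ := exists_dominating hK hδ
    have hτc' : Continuous fun x => (⟨x, τ x⟩ : Bundle.TotalSpace F E) := hτc
    refine ⟨fun x => σ₁ x - τ x, fun x => σ₂ x + τ x, ?_, ?_, ?_, ?_, ?_, ?_⟩
    · rw [IsContSection, continuous_iff_continuousAt]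
      intro x
      exact contAt_sub_section h₁'.continuousAt hτc'.continuousAt
    · rw [IsContSection, continuous_iff_continuousAt]
      intro x
      exact contAt_add_section h₂'.continuousAt hτc'.continuousAt
    · intro x
      simpa [sub_sub_cancel] using hτK x
    · intro x
      have heq : σ₂ x - (σ₁ x - τ x) = τ x - (σ₁ x - σ₂ x) := by abel
      rw [heq]
      exact hτd x
    · intro x
      have heq : σ₂ x + τ x - σ₁ x = τ x - (σ₁ x - σ₂ x) := by abel
      rw [heq]
      exact hτd x
    · intro x
      simpa using hτK x
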